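/- Let C_0 be an [n,t] linear code over F_q with generator matrix G_0, and suppose C_0^{(e)} is an [n+Δ, t] extension code with generator matrix G_0^{(e)} = [G_0 | Q'] for some t×Δ matrix Q', with Δ < t, satisfying: for every S ⊆ [n] with |S| = t - Δ, rank(G_0^{(e)}|_{S ∪ {n+1,...,n+Δ}}) = rank(G_0|_S) + Δ. Then the shortened code (C_0^{(e)})^{[n]} (the set of codewords of C_0^{(e)} supported on the first n coordinates, restricted to those coordinates) is an [n, t-Δ] maximally recoverable subcode of C_0. -/

import Mathlib

open Matrix

section Defs
variable {F : Type*} [Field F]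

/-- Rank of the submatrix of `G` consisting of the columns indexed by `S`. -/
noncomputable def colRank {m α : Type*} [Fintype α] (G : Matrix m α F) (S : Finset α) : ℕ :=
  (G.submatrix id (fun j : S => (j : α))).rank

/-- The row space of a matrix. -/
def rowSpan {m α : Type*} (G : Matrix m α F) : Submodule F (α → F) :=
  Submodule.span F (Set.range fun i => G i)

/-- Rank of the restriction (puncturing) of a code `C` to the coordinates in `S`. -/
noncomputable def restrRank {α : Type*} (C : Submodule F (α → F)) (S : Finset α) : ℕ :=
  Module.finrank F (C.map (LinearMap.funLeft F F (fun j : S => (j : α))))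

/-- Shortening of a code on coordinates `α ⊕ β` to the coordinates `α`. -/
noncomputable def shortenSum {α β : Type*} (D : Submodule F ((α ⊕ β) → F)) :
    Submodule F (α → F) :=
  Submodule.map (LinearMap.funLeft F F Sum.inl)
    (D ⊓ (⨅ j : β, LinearMap.ker
      (LinearMap.proj (R := F) (Sum.inr j) : ((α ⊕ β) → F) →ₗ[F] F)))

/-- A valid (zero-error, worst case) scheme for the point-to-point function-update problem. -/
def IsValidScheme [DecidableEq F] {n m ℓ : ℕ} (A : Matrix (Fin m) (Fin n) F)
    (H : Matrix (Fin ℓ) (Fin n) F) (ε : ℕ)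
    (D : (Fin ℓ → F) → (Fin m → F) → (Fin m → F)) : Prop :=
  ∀ X E : Fin n → F, hammingNorm E ≤ ε →
    D (H.mulVec (X + E)) (A.mulVec X) = A.mulVec (X + E)

end Defs

section AuxMRSC
variable {F : Type*} [Field F] {t n Δ : ℕ}

lemma aux_vecMulLinear_inj {k : Type*} [Fintype k]
    (M : Matrix (Fin t) k F) (h : M.rank = t) : Function.Injective M.vecMulLinear := by
  rw [← LinearMap.ker_eq_bot, ← Matrix.mulVecLin_transpose]
  have h1 := LinearMap.finrank_range_add_finrank_ker (Mᵀ.mulVecLin)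
  have h2 : Module.finrank F (LinearMap.range Mᵀ.mulVecLin) = t := by
    have : Mᵀ.rank = t := by rw [Matrix.rank_transpose, h]
    simpa [Matrix.rank] using this
  rw [h2, Module.finrank_pi, Fintype.card_fin] at h1
  have h3 : Module.finrank F (LinearMap.ker Mᵀ.mulVecLin) = 0 := by omega
  exact Submodule.finrank_eq_zero.mp h3

lemma aux_finrank_map {V W : Type*} [AddCommGroup V] [Module F V] [FiniteDimensional F V]
    [AddCommGroup W] [Module F W]
    (K : Submodule F V) (h : V →ₗ[F] W) (hinj : ∀ x ∈ K, h x = 0 → x = 0) :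
    Module.finrank F (K.map h) = Module.finrank F K := by
  have hker : LinearMap.ker (h ∘ₗ K.subtype) = ⊥ := by
    rw [LinearMap.ker_eq_bot']
    intro m hm
    exact Subtype.ext (hinj m m.2 hm)
  have hr : LinearMap.range (h ∘ₗ K.subtype) = K.map h := by
    rw [LinearMap.range_comp, Submodule.range_subtype]
  have := LinearMap.finrank_range_add_finrank_ker (h ∘ₗ K.subtype)
  rw [hker, hr] at this
  simpa using this

lemma aux_rowSpan {m α : Type*} [Fintype m] (G : Matrix m α F) :
    rowSpan G = LinearMap.range G.vecMulLinear := by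
  rw [range_vecMulLinear]; rfl

lemma aux_shorten (G0 : Matrix (Fin t) (Fin n) F) (Q' : Matrix (Fin t) (Fin Δ) F) :
    shortenSum (rowSpan (Matrix.fromCols G0 Q')) =
      (LinearMap.ker Q'.vecMulLinear).map G0.vecMulLinear := by
  ext y
  simp only [shortenSum, aux_rowSpan, Submodule.mem_map, Submodule.mem_inf,
    LinearMap.mem_range, Submodule.mem_iInf, LinearMap.mem_ker]
  constructor
  · rintro ⟨v, ⟨⟨x, rfl⟩, hz⟩, rfl⟩
    refine ⟨x, ?_, ?_⟩
    · funext j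
      have := hz j
      simpa [Matrix.vecMulLinear_apply, Matrix.vecMul_fromCols] using this
    · funext i
      simp [Matrix.vecMulLinear_apply, Matrix.vecMul_fromCols, LinearMap.funLeft]
  · rintro ⟨x, hx, rfl⟩
    refine ⟨(Matrix.fromCols G0 Q').vecMulLinear x, ⟨⟨x, rfl⟩, ?_⟩, ?_⟩
    · intro j
      have := congrFun hx j
      simp only [Matrix.vecMulLinear_apply, Pi.zero_apply] at this
      simp [Matrix.vecMulLinear_apply, Matrix.vecMul_fromCols, this]
    · funext i
      simp [Matrix.vecMulLinear_apply, Matrix.vecMul_fromCols, LinearMap.funLeft]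

lemma aux_comp (G0 : Matrix (Fin t) (Fin n) F) (S : Finset (Fin n)) :
    (LinearMap.funLeft F F (fun j : S => (j : Fin n))) ∘ₗ G0.vecMulLinear =
      (G0.submatrix id (fun j : S => (j : Fin n))).vecMulLinear :=
  LinearMap.ext fun x => rfl

lemma aux_colRank (G0 : Matrix (Fin t) (Fin n) F) (S : Finset (Fin n)) :
    colRank G0 S = Module.finrank F (Submodule.span F (G0.col '' ↑S)) := by
  have h : Set.range ((G0.submatrix id fun j : S => (j : Fin n)).col) = G0.col '' ↑S := by
    ext v
    simp only [Set.mem_range, Set.mem_image, Finset.mem_coe]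
    constructor
    · rintro ⟨j, rfl⟩; exact ⟨j, j.2, rfl⟩
    · rintro ⟨j, hj, rfl⟩; exact ⟨⟨j, hj⟩, rfl⟩
  rw [colRank, Matrix.rank_eq_finrank_span_cols, h]

lemma aux_exists (G0 : Matrix (Fin t) (Fin n) F) (hG0 : G0.rank = t) (r : ℕ) (hr : r ≤ t) :
    ∃ S : Finset (Fin n), S.card = r ∧ colRank G0 S = r := by
  classical
  obtain ⟨b, hbsub, hbspan, hbind⟩ := exists_linearIndependent F (Set.range G0.col)
  have hbfin : b.Finite := (Set.finite_range G0.col).subset hbsub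
  haveI := hbfin.fintype
  have hcard : b.toFinset.card = t := by
    rw [← finrank_span_set_eq_card hbind, hbspan, ← Matrix.rank_eq_finrank_span_cols, hG0]
  obtain ⟨b', hb'sub, hb'card⟩ := Finset.exists_subset_card_eq (le_trans hr hcard.ge)
  have hex : ∀ v : {x // x ∈ b'}, ∃ j : Fin n, G0.col j = (v : Fin t → F) := fun v =>
    hbsub (by simpa using hb'sub v.2)
  choose g hg using hex
  refine ⟨b'.attach.image g, ?_, ?_⟩
  · rw [Finset.card_image_of_injOn, Finset.card_attach, hb'card]
    intro v _ w _ hvw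
    exact Subtype.ext (by rw [← hg v, ← hg w, hvw])
  · have himg : G0.col '' ↑(b'.attach.image g) = ↑b' := by
      ext v
      simp only [Finset.coe_image, Set.image_image, Set.mem_image, Finset.mem_coe]
      constructor
      · rintro ⟨w, -, rfl⟩; rw [hg w]; exact w.2
      · intro hv; exact ⟨⟨v, hv⟩, Finset.mem_attach _ _, hg ⟨v, hv⟩⟩
    rw [aux_colRank, himg]
    have hind : LinearIndependent F ((↑) : (↑b' : Set (Fin t → F)) → (Fin t → F)) := by
      apply linearIndependent_subtype_iff.mpr (LinearIndepOn.mono (linearIndependent_subtype_iff.mp hbind) ?_)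
      intro v hv
      simpa using hb'sub hv
    rw [finrank_span_set_eq_card hind]
    simpa using hb'card

end AuxMRSC

/-- if the extension `[G0 | Q']` satisfies the rank condition on all
column sets of size `t - Δ`, then the shortening of the extended code to the first `n`
coordinates is an `[n, t-Δ]` MRSC of `C₀`. -/
theorem shortening_of_extension_is_mrsc {F : Type*} [Field F] [Fintype F]
    {n t Δ : ℕ} (hΔ : Δ < t)
    (G0 : Matrix (Fin t) (Fin n) F) (hG0 : G0.rank = t)
    (Q' : Matrix (Fin t) (Fin Δ) F)
    (hext : ∀ S : Finset (Fin n), S.card = t - Δ →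
      (Matrix.fromCols (G0.submatrix id (fun j : S => (j : Fin n))) Q').rank =
        colRank G0 S + Δ) :
    Module.finrank F (shortenSum (rowSpan (Matrix.fromCols G0 Q'))) = t - Δ ∧
      (∀ x ∈ shortenSum (rowSpan (Matrix.fromCols G0 Q')), x ∈ rowSpan G0) ∧
      (∀ S : Finset (Fin n), S.card = t - Δ → colRank G0 S = t - Δ →
        restrRank (shortenSum (rowSpan (Matrix.fromCols G0 Q'))) S = t - Δ) := by
  classical
  set K := LinearMap.ker Q'.vecMulLinear with hK
  have hshort := aux_shorten G0 Q'
  -- the key: for any good S of size t - Δ, the restriction map is injective on K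
  have key : ∀ S : Finset (Fin n), S.card = t - Δ → colRank G0 S = t - Δ →
      Module.finrank F
        (K.map (G0.submatrix id (fun j : S => (j : Fin n))).vecMulLinear) =
        Module.finrank F K := by
    intro S hcard hcol
    apply aux_finrank_map
    intro x hx hx0
    have hrank : (Matrix.fromCols (G0.submatrix id (fun j : S => (j : Fin n))) Q').rank
        = t := by
      rw [hext S hcard, hcol]
      omega
    have hinj := aux_vecMulLinear_inj _ hrank
    have hzero :
        (Matrix.fromCols (G0.submatrix id (fun j : S => (j : Fin n))) Q').vecMulLinear x
          = 0 := by
      have hxQ : x ᵥ* Q' = 0 := hx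
      have hxA : x ᵥ* (G0.submatrix id (fun j : S => (j : Fin n))) = 0 := hx0
      funext j
      cases j with
      | inl j => simp [Matrix.vecMulLinear_apply, Matrix.vecMul_fromCols, hxA]
      | inr j => simp [Matrix.vecMulLinear_apply, Matrix.vecMul_fromCols, hxQ]
    exact hinj (by rw [hzero, map_zero])
  -- compute finrank K = t - Δ
  obtain ⟨S₀, hS₀card, hS₀col⟩ := aux_exists G0 hG0 (t - Δ) (Nat.sub_le t Δ)
  have hK_le : Module.finrank F K ≤ t - Δ := by
    rw [← key S₀ hS₀card hS₀col]
    have h1 := Submodule.finrank_le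
      (K.map (G0.submatrix id (fun j : S₀ => (j : Fin n))).vecMulLinear)
    rwa [Module.finrank_pi, Fintype.card_coe, hS₀card] at h1
  have hK_ge : t - Δ ≤ Module.finrank F K := by
    have h1 := LinearMap.finrank_range_add_finrank_ker Q'.vecMulLinear
    rw [Module.finrank_pi, Fintype.card_fin, ← hK] at h1
    have h2 : Module.finrank F (LinearMap.range Q'.vecMulLinear) ≤ Δ := by
      have h3 := Submodule.finrank_le (LinearMap.range Q'.vecMulLinear)
      rwa [Module.finrank_pi, Fintype.card_fin] at h3
    omega
  have hKrank : Module.finrank F K = t - Δ := le_antisymm hK_le hK_ge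
  refine ⟨?_, ?_, ?_⟩
  · rw [hshort, ← hKrank]
    apply aux_finrank_map
    intro x _ hx0
    exact aux_vecMulLinear_inj G0 hG0 (by rw [hx0, map_zero])
  · rw [hshort, aux_rowSpan]
    rintro x ⟨y, -, rfl⟩
    exact ⟨y, rfl⟩
  · intro S hcard hcol
    rw [restrRank, hshort, ← Submodule.map_comp, aux_comp, key S hcard hcol, hKrank]
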